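/- Let Γ be a connected Polish group acting continuously on a Polish space X with no fixed points. Then for every x ∈ X and every a ∈ 2^ℕ, there exists g ∈ Γ and a point w in a fixed countable dense subset of X such that the distance d(g·x, w) has a binary code Turing-computing a. Consequently the orbit equivalence relation has the Borel coding property. -/

import Mathlib

/-- Partial functions `ℕ →. ℕ` recursive in an oracle `O : ℕ → ℕ`. -/
inductive RecursiveInOracle (O : ℕ → ℕ) : (ℕ →. ℕ) → Prop
  | oracle : RecursiveInOracle O O
  | zero : RecursiveInOracle O (fun _ => 0)
  | succ : RecursiveInOracle O Nat.succ
  | left : RecursiveInOracle O (fun n => (Nat.unpair n).1)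
  | right : RecursiveInOracle O (fun n => (Nat.unpair n).2)
  | pair {f g : ℕ →. ℕ} : RecursiveInOracle O f → RecursiveInOracle O g →
      RecursiveInOracle O (fun n => Nat.pair <$> f n <*> g n)
  | comp {f g : ℕ →. ℕ} : RecursiveInOracle O f → RecursiveInOracle O g →
      RecursiveInOracle O (fun n => g n >>= f)
  | prec {f g : ℕ →. ℕ} : RecursiveInOracle O f → RecursiveInOracle O g →
      RecursiveInOracle O (Nat.unpaired fun a n =>
        n.rec (f a) fun y IH => do let i ← IH; g (Nat.pair a (Nat.pair y i)))
  | rfind {f : ℕ →. ℕ} : RecursiveInOracle O f →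
      RecursiveInOracle O (fun a => Nat.rfind fun n => (fun m => m = 0) <$> f (Nat.pair a n))

/-- The characteristic function (with values in `ℕ`) of an element of Cantor space. -/
def toNatFun (x : ℕ → Bool) : ℕ → ℕ := fun n => cond (x n) 1 0

/-- Turing reducibility between elements of Cantor space. -/
def TuringLE (x y : ℕ → Bool) : Prop := RecursiveInOracle (toNatFun y) (toNatFun x)

/-- The recursive join of two elements of Cantor space. -/
def join (x y : ℕ → Bool) : ℕ → Bool := fun n => if n % 2 = 0 then x (n / 2) else y (n / 2)

/-- A binary code for a real number `r`: the characteristic function of the set of (codes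
of) rationals below `r`. -/
noncomputable def realCode (r : ℝ) : ℕ → Bool := fun n =>
  @decide (∃ q : ℚ, Encodable.encode q = n ∧ (q : ℝ) < r) (Classical.dec _)


lemma recIn_of_nat_partrec (O : ℕ → ℕ) {f : ℕ →. ℕ} (h : Nat.Partrec f) : RecursiveInOracle O f := by
  induction h with
  | zero => exact .zero
  | succ => exact .succ
  | left => exact .left
  | right => exact .right
  | pair _ _ ihf ihg => exact .pair ihf ihg
  | comp _ _ ihf ihg => exact .comp ihf ihg
  | prec _ _ ihf ihg => exact .prec ihf ihg
  | rfind _ ih => exact .rfind ih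

lemma recIn_trans {O₁ O₂ : ℕ → ℕ} {f : ℕ →. ℕ} (h : RecursiveInOracle O₂ f)
    (hO : RecursiveInOracle O₁ O₂) : RecursiveInOracle O₁ f := by
  induction h with
  | oracle => exact hO
  | zero => exact .zero
  | succ => exact .succ
  | left => exact .left
  | right => exact .right
  | pair _ _ ihf ihg => exact .pair ihf ihg
  | comp _ _ ihf ihg => exact .comp ihf ihg
  | prec _ _ ihf ihg => exact .prec ihf ihg
  | rfind _ ih => exact .rfind ih

lemma recIn_of_computable (O : ℕ → ℕ) {f : ℕ → ℕ} (h : Computable f) :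
    RecursiveInOracle O f :=
  recIn_of_nat_partrec O (Partrec.nat_iff.1 h)

lemma recIn_totalComp {O : ℕ → ℕ} {f g : ℕ → ℕ} (hf : RecursiveInOracle O f)
    (hg : RecursiveInOracle O g) : RecursiveInOracle O (fun n => f (g n) : ℕ → ℕ) := by
  have e : ((fun n => f (g n) : ℕ → ℕ) : ℕ →. ℕ) = fun n => (g : ℕ →. ℕ) n >>= (f : ℕ →. ℕ) := by
    funext n; exact ((Part.bind_eq_bind _ _).trans (Part.bind_some _ _)).symm
  rw [e]; exact .comp hf hg

lemma recIn_totalPair {O : ℕ → ℕ} {f g : ℕ → ℕ} (hf : RecursiveInOracle O f)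
    (hg : RecursiveInOracle O g) : RecursiveInOracle O (fun n => Nat.pair (f n) (g n) : ℕ → ℕ) := by
  have e : ((fun n => Nat.pair (f n) (g n) : ℕ → ℕ) : ℕ →. ℕ)
      = fun n => Nat.pair <$> (f : ℕ →. ℕ) n <*> (g : ℕ →. ℕ) n := by
    funext n; simp [PFun.lift, Seq.seq]
  rw [e]; exact .pair hf hg

lemma recIn_oracleComp {O : ℕ → ℕ} {c : ℕ → ℕ} (hc : Computable c) :
    RecursiveInOracle O (fun n => O (c n) : ℕ → ℕ) :=
  recIn_totalComp .oracle (recIn_of_computable O hc)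

lemma recIn_key (O : ℕ → ℕ) (A : ℕ → Bool) (c₁ c₂ B : ℕ → ℕ)
    (hc₁ : Computable c₁) (hc₂ : Computable c₂) (hB : Computable B)
    (h : ∀ k, A k = true ↔ ∃ j, j < B k ∧ O (c₁ (Nat.pair k j)) ≠ 0 ∧ O (c₂ (Nat.pair k j)) = 0) :
    RecursiveInOracle O (toNatFun A) := by
  classical
  -- the total test function
  set t : ℕ → ℕ := fun m =>
    (B (Nat.unpair m).1 - (Nat.unpair m).2) * (O (c₂ m) + (1 - O (c₁ m))) with ht_def
  have ht : RecursiveInOracle O t := by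
    have h1 : Computable (fun m => B (Nat.unpair m).1 - (Nat.unpair m).2) := by
      have : Computable (fun m => B (Nat.unpair m).1) :=
        hB.comp ((Primrec.fst.comp Primrec.unpair).to_comp)
      exact Primrec₂.to_comp Primrec.nat_sub |>.comp this
        ((Primrec.snd.comp Primrec.unpair).to_comp)
    have h2 : RecursiveInOracle O (fun m => O (c₂ m) + (1 - O (c₁ m)) : ℕ → ℕ) := by
      have e : (fun m => O (c₂ m) + (1 - O (c₁ m)) : ℕ → ℕ)
          = fun m => (fun q => (Nat.unpair q).1 + (1 - (Nat.unpair q).2))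
              (Nat.pair (O (c₂ m)) (O (c₁ m))) := by
        funext m; simp
      rw [e]
      exact recIn_totalComp
        (recIn_of_computable O (by
          have : Primrec (fun q => (Nat.unpair q).1 + (1 - (Nat.unpair q).2)) := by
            exact Primrec.nat_add.comp (Primrec.fst.comp Primrec.unpair)
              (Primrec.nat_sub.comp (Primrec.const 1) (Primrec.snd.comp Primrec.unpair))
          exact this.to_comp))
        (recIn_totalPair (recIn_oracleComp hc₂) (recIn_oracleComp hc₁))
    -- t = mul of the two
    have e : t = fun m => (fun q => (Nat.unpair q).1 * (Nat.unpair q).2)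
        (Nat.pair (B (Nat.unpair m).1 - (Nat.unpair m).2) ((fun m => O (c₂ m) + (1 - O (c₁ m))) m)) := by
      funext m; simp [ht_def]
    rw [e]
    exact recIn_totalComp
      (recIn_of_computable O
        (Primrec.nat_mul.comp (Primrec.fst.comp Primrec.unpair)
          (Primrec.snd.comp Primrec.unpair)).to_comp)
      (recIn_totalPair (recIn_of_computable O h1) h2)
  have Hex : ∀ k, ∃ j, t (Nat.pair k j) = 0 := fun k =>
    ⟨B k, by simp [ht_def]⟩
  set F : ℕ → ℕ := fun k => Nat.find (Hex k) with hF_def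
  have hF : RecursiveInOracle O F := by
    have hR := RecursiveInOracle.rfind (f := (t : ℕ →. ℕ)) ht
    have e : (fun a => Nat.rfind fun n => (fun m => m = 0) <$> (t : ℕ →. ℕ) (Nat.pair a n))
        = ((F : ℕ → ℕ) : ℕ →. ℕ) := by
      funext k
      rw [show ((F : ℕ →. ℕ) k) = Part.some (F k) from rfl, Part.eq_some_iff]
      apply Nat.mem_rfind.2
      constructor
      · simp [PFun.lift, Nat.find_spec (Hex k)]
        exact Nat.find_spec (Hex k)
      · intro m hm
        simp only [PFun.lift, Part.map_some, Part.mem_some_iff]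
        simp [Nat.find_min (Hex k) hm]
      -- note: orders of goals may differ
    rwa [e] at hR
  -- characterization
  have hchar : ∀ k, toNatFun A k = min (B k - F k) 1 := by
    intro k
    have iff1 : A k = true ↔ F k < B k := by
      constructor
      · intro hA
        obtain ⟨j, hj, hx, hy⟩ := (h k).1 hA
        have htj : t (Nat.pair k j) = 0 := by
          simp [ht_def, hy]
          omega
        exact lt_of_le_of_lt (Nat.find_min' (Hex k) htj) hj
      · intro hlt
        have h0 : t (Nat.pair k (F k)) = 0 := Nat.find_spec (Hex k)
        simp only [ht_def, Nat.unpair_pair] at h0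
        rcases Nat.mul_eq_zero.1 h0 with h1 | h2
        · omega
        · exact (h k).2 ⟨F k, hlt, by omega, by omega⟩
    by_cases hA : A k = true
    · have := iff1.1 hA
      simp [toNatFun, hA]
      omega
    · have : ¬ F k < B k := fun hc => hA (iff1.2 hc)
      simp only [toNatFun, Bool.not_eq_true] at hA ⊢
      simp [hA]
      omega
  have e2 : toNatFun A = fun k => (fun q => min ((Nat.unpair q).1 - (Nat.unpair q).2) 1)
      (Nat.pair (B k) (F k)) := by
    funext k; simp [hchar k]
  rw [e2]
  exact recIn_totalComp
    (recIn_of_computable O (by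
      have : Primrec (fun q => min ((Nat.unpair q).1 - (Nat.unpair q).2) 1) := by
        have := Primrec.nat_sub.comp (Primrec.fst.comp Primrec.unpair)
          (Primrec.snd.comp Primrec.unpair)
        exact Primrec.nat_min.comp this (Primrec.const 1)
      exact this.to_comp))
    (recIn_totalPair (recIn_totalComp (recIn_of_computable O hB)
        (recIn_of_computable O Computable.id))
      hF)


private def gstep : ℕ × ℕ → ℕ × ℕ := fun p => if p.1 = 0 then p else (p.2 % p.1, p.1)

private lemma gstep_iter : ∀ n a b, a ≤ n → (gstep^[n + 1] (a, b)).2 = Nat.gcd a b := by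
  intro n
  induction n using Nat.strong_induction_on with
  | _ n IH =>
    intro a b hab
    rcases Nat.eq_zero_or_pos a with rfl | ha
    · have hfix : gstep (0, b) = (0, b) := by simp [gstep]
      rw [Function.iterate_fixed hfix]
      simp
    · have hn : 0 < n := lt_of_lt_of_le ha hab
      obtain ⟨m, rfl⟩ := Nat.exists_eq_succ_of_ne_zero hn.ne'
      rw [Function.iterate_succ_apply]
      have hstep : gstep (a, b) = (b % a, a) := by simp [gstep, ha.ne']
      rw [hstep]
      have hba : b % a ≤ m := by
        have := Nat.mod_lt b ha
        omega
      rw [IH m (Nat.lt_succ_self m) _ _ hba]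
      exact (Nat.gcd_rec a b).symm

private lemma primrec_gstep : Primrec gstep := by
  unfold gstep
  exact Primrec.ite (Primrec.eq.comp Primrec.fst (Primrec.const 0)) Primrec.id
    (Primrec.pair (Primrec.nat_mod.comp Primrec.snd Primrec.fst) Primrec.fst)

private lemma primrec_gcd : Primrec₂ Nat.gcd := by
  have h : Primrec (fun p : ℕ × ℕ => (gstep^[p.1 + 1] p).2) := by
    have := Primrec.nat_iterate (f := fun p : ℕ × ℕ => p.1 + 1) (g := id)
      (h := fun (_ : ℕ × ℕ) q => gstep q)
      (Primrec.succ.comp Primrec.fst) Primrec.id (primrec_gstep.comp Primrec.snd).to₂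
    exact Primrec.snd.comp this
  have h2 : Primrec (fun p : ℕ × ℕ => Nat.gcd p.1 p.2) :=
    h.of_eq fun p => gstep_iter p.1 p.1 p.2 le_rfl
  exact h2.to₂

private lemma primrec_pow : Primrec₂ (fun a b : ℕ => a ^ b) :=
  Primrec₂.unpaired'.1 Nat.Primrec.pow

private def ratEnc : ℕ → ℕ → ℕ := fun n d =>
  Nat.pair (2 * (n / Nat.gcd n d)) (d / Nat.gcd n d)

private lemma primrec_ratEnc : Primrec₂ ratEnc := by
  unfold ratEnc
  exact Primrec₂.natPair.comp
    (Primrec.nat_mul.comp (Primrec.const 2)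
      (Primrec.nat_div.comp Primrec.fst (primrec_gcd.comp Primrec.fst Primrec.snd)))
    (Primrec.nat_div.comp Primrec.snd (primrec_gcd.comp Primrec.fst Primrec.snd))

private lemma encode_div_nat (n d : ℕ) (hd : d ≠ 0) :
    Encodable.encode ((n : ℚ) / (d : ℚ)) = ratEnc n d := by
  have h1 : ((n:ℚ)/(d:ℚ)) = mkRat (n:ℤ) d := by
    rw [Rat.mkRat_eq_div]; push_cast; ring
  have hnum : ((n:ℚ)/(d:ℚ)).num = ((n / n.gcd d : ℕ) : ℤ) := by
    rw [h1, ← Rat.normalize_eq_mkRat hd, Rat.normalize_eq]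
    simp only [Int.natAbs_natCast]
    omega
  have hden : ((n:ℚ)/(d:ℚ)).den = d / n.gcd d := by
    rw [h1, ← Rat.normalize_eq_mkRat hd, Rat.normalize_eq]
    simp [Int.natAbs_natCast]
  have he : ∀ q : ℚ, Encodable.encode q = Nat.pair (Encodable.encode q.num) q.den :=
    fun q => rfl
  have he2 : ∀ m : ℕ, Encodable.encode ((m : ℤ)) = 2 * m := fun m => rfl
  rw [he, hnum, hden, he2, ratEnc]


noncomputable def bv (b : Bool) : ℝ := cond b 1 0

lemma bv_nonneg (b : Bool) : 0 ≤ bv b := by cases b <;> simp [bv]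
lemma bv_le_one (b : Bool) : bv b ≤ 1 := by cases b <;> simp [bv]

noncomputable def xval (d : ℕ → Bool) : ℝ := ∑' n, bv (d n) / 2 ^ (n + 1)

lemma geomS : Summable (fun n : ℕ => (1:ℝ) / 2 ^ (n + 1)) := by
  have h := summable_geometric_two.mul_left (2:ℝ)⁻¹
  refine h.congr fun n => ?_
  rw [pow_succ]
  field_simp
  rw [← mul_pow]; norm_num

lemma geomT : ∑' n : ℕ, (1:ℝ) / 2 ^ (n + 1) = 1 := by
  have h := tsum_geometric_two' 1
  have e : (fun n : ℕ => (1:ℝ) / 2 / 2 ^ n) = fun n => (1:ℝ) / 2 ^ (n + 1) := by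
    funext n; rw [pow_succ]; ring
  rw [e] at h
  exact h

lemma le_geom_term (d : ℕ → Bool) (n : ℕ) : bv (d n) / 2 ^ (n + 1) ≤ (1:ℝ) / 2 ^ (n + 1) := by
  gcongr
  exact bv_le_one _

lemma xval_summable (d : ℕ → Bool) : Summable (fun n => bv (d n) / 2 ^ (n + 1) : ℕ → ℝ) :=
  Summable.of_nonneg_of_le (fun n => by have := bv_nonneg (d n); positivity)
    (le_geom_term d) geomS

lemma xval_nonneg (d : ℕ → Bool) : 0 ≤ xval d :=
  tsum_nonneg fun n => by have := bv_nonneg (d n); positivity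

lemma xval_le_one (d : ℕ → Bool) : xval d ≤ 1 := by
  have h := Summable.tsum_le_tsum (le_geom_term d) (xval_summable d) geomS
  rwa [geomT] at h

lemma xval_pos (d : ℕ → Bool) (h : ∃ j, d j = true) : 0 < xval d := by
  obtain ⟨j, hj⟩ := h
  have h1 : bv (d j) / 2 ^ (j + 1) ≤ xval d :=
    Summable.le_tsum (xval_summable d) j (fun m _ => by have := bv_nonneg (d m); positivity)
  have h2 : (1:ℝ) / 2 ^ (j + 1) ≤ xval d := by simpa [hj, bv] using h1
  have h3 : (0:ℝ) < 1 / 2 ^ (j + 1) := by positivity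
  linarith

lemma xval_lt_one (d : ℕ → Bool) (h : ∃ j, d j = false) : xval d < 1 := by
  obtain ⟨j, hj⟩ := h
  have hsub : Summable (fun n => (1:ℝ) / 2 ^ (n + 1) - bv (d n) / 2 ^ (n + 1)) :=
    geomS.sub (xval_summable d)
  have h1 : (1:ℝ) / 2 ^ (j + 1) - bv (d j) / 2 ^ (j + 1)
      ≤ ∑' n, ((1:ℝ) / 2 ^ (n + 1) - bv (d n) / 2 ^ (n + 1)) :=
    Summable.le_tsum hsub j (fun m _ => by have := le_geom_term d m; linarith)
  rw [Summable.tsum_sub geomS (xval_summable d), geomT] at h1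
  have h2 : (0:ℝ) < 1 / 2 ^ (j + 1) := by positivity
  have h3 : bv (d j) = 0 := by rw [hj]; simp [bv]
  rw [h3] at h1
  simp only [zero_div, sub_zero] at h1
  unfold xval
  linarith

lemma xval_split (d : ℕ → Bool) (N : ℕ) :
    xval d = (∑ n ∈ Finset.range N, bv (d n) / 2 ^ (n + 1))
      + ((2:ℝ) ^ N)⁻¹ * xval (fun n => d (n + N)) := by
  have h := (Summable.sum_add_tsum_nat_add (f := fun n => bv (d n) / 2 ^ (n + 1)) N
    (xval_summable d)).symm
  have h2 : ∑' n : ℕ, bv (d (n + N)) / 2 ^ (n + N + 1)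
      = ((2:ℝ) ^ N)⁻¹ * ∑' n : ℕ, bv (d (n + N)) / 2 ^ (n + 1) := by
    rw [← tsum_mul_left]
    exact tsum_congr fun n => by
      rw [show n + N + 1 = (n + 1) + N by ring, pow_add]
      field_simp
  rw [xval, h, h2, xval]

def Jb (d : ℕ → Bool) : ℕ → ℕ
  | 0 => 0
  | N + 1 => 2 * Jb d N + cond (d N) 1 0

lemma Jb_lt (d : ℕ → Bool) (N : ℕ) : Jb d N < 2 ^ N := by
  induction N with
  | zero => simp [Jb]
  | succ N ih =>
    have : cond (d N) 1 0 ≤ 1 := by cases d N <;> simp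
    simp only [Jb, pow_succ]
    omega

lemma Jb_eq (d : ℕ → Bool) (N : ℕ) :
    ((Jb d N : ℝ)) / 2 ^ N = ∑ n ∈ Finset.range N, bv (d n) / 2 ^ (n + 1) := by
  induction N with
  | zero => simp [Jb]
  | succ N ih =>
    rw [Finset.sum_range_succ, ← ih]
    have hc : ((cond (d N) 1 0 : ℕ) : ℝ) = bv (d N) := by cases d N <;> simp [bv]
    simp only [Jb]
    push_cast
    rw [hc, pow_succ]
    field_simp

lemma digit_iff (d : ℕ → Bool)
    (hm : ∀ N, (∃ n, d (n + N) = true) ∧ (∃ n, d (n + N) = false)) (N : ℕ) :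
    (d N = true ↔ ∃ j : ℕ, j < 2 ^ N ∧
      ((2 * j + 1 : ℝ) / 2 ^ (N + 1) < xval d ∧ xval d ≤ (2 * j + 2) / 2 ^ (N + 1))) := by
  set J := Jb d N with hJ
  set τ := xval (fun n => d (n + (N + 1))) with hτ
  have hτ0 : 0 < τ := xval_pos _ (hm (N + 1)).1
  have hτ1 : τ < 1 := xval_lt_one _ (hm (N + 1)).2
  have hp : (0:ℝ) < 2 ^ (N + 1) := by positivity
  have hpN : (0:ℝ) < 2 ^ N := by positivity
  have heq : xval d = (J : ℝ) / 2 ^ N + bv (d N) / 2 ^ (N + 1) + τ / 2 ^ (N + 1) := by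
    rw [xval_split d (N + 1), Finset.sum_range_succ, ← Jb_eq d N]
    rw [← hτ]
    field_simp
    rw [hJ]; ring
  constructor
  · intro hd
    refine ⟨J, Jb_lt d N, ?_, ?_⟩
    · have h1 : ((2 * J + 1 : ℝ)) / 2 ^ (N + 1) = (J : ℝ) / 2 ^ N + 1 / 2 ^ (N + 1) := by
        rw [pow_succ]; field_simp
      have h2 : (0:ℝ) < τ / 2 ^ (N + 1) := div_pos hτ0 hp
      rw [heq, hd]
      simp only [bv, cond_true]
      linarith
    · have h1 : ((2 * J + 2 : ℝ)) / 2 ^ (N + 1) = (J : ℝ) / 2 ^ N + 1 / 2 ^ (N + 1) + 1 / 2 ^ (N + 1) := by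
        rw [pow_succ]; field_simp; ring
      have h2 : τ / 2 ^ (N + 1) ≤ 1 / 2 ^ (N + 1) := by
        gcongr
      rw [heq, hd]
      simp only [bv, cond_true]
      linarith
  · intro hex
    by_contra hd
    have hd' : d N = false := by simpa using hd
    obtain ⟨j, hjlt, hlo, hhi⟩ := hex
    have hbv : bv (d N) = 0 := by rw [hd']; simp [bv]
    rw [heq, hbv] at hlo hhi
    rw [zero_div, add_zero] at hlo hhi
    -- xval d = J/2^N + τ/2^(N+1), τ ∈ (0,1)
    have e1 : (J : ℝ) / 2 ^ N = (2 * J : ℝ) / 2 ^ (N + 1) := by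
      rw [pow_succ]; field_simp
    -- upper: xval < (2J+1)/2^(N+1)
    have hup : (2 * (J:ℝ)) / 2 ^ (N + 1) + τ / 2 ^ (N + 1) < (2 * J + 1 : ℝ) / 2 ^ (N + 1) := by
      rw [← add_div, div_lt_div_iff₀ hp hp]
      nlinarith
    have hlow : (2 * (J:ℝ)) / 2 ^ (N + 1) < (2 * J : ℝ) / 2 ^ (N + 1) + τ / 2 ^ (N + 1) := by
      have : (0:ℝ) < τ / 2 ^ (N + 1) := div_pos hτ0 hp
      linarith
    -- combine
    have c1 : (2 * (j:ℝ) + 1) / 2 ^ (N + 1) < (2 * (J:ℝ) + 1) / 2 ^ (N + 1) := by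
      calc (2 * (j:ℝ) + 1) / 2 ^ (N + 1) < (J : ℝ) / 2 ^ N + τ / 2 ^ (N + 1) := hlo
        _ = (2 * (J:ℝ)) / 2 ^ (N + 1) + τ / 2 ^ (N + 1) := by rw [e1]
        _ < (2 * (J:ℝ) + 1) / 2 ^ (N + 1) := hup
    have c2 : (2 * (J:ℝ)) / 2 ^ (N + 1) < (2 * (j:ℝ) + 2) / 2 ^ (N + 1) := by
      calc (2 * (J:ℝ)) / 2 ^ (N + 1) < (J : ℝ) / 2 ^ N + τ / 2 ^ (N + 1) := by
            rw [e1]; have : (0:ℝ) < τ / 2 ^ (N + 1) := div_pos hτ0 hp; linarith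
        _ ≤ (2 * (j:ℝ) + 2) / 2 ^ (N + 1) := hhi
    have n1r : (2 * (j:ℝ) + 1) < 2 * (J:ℝ) + 1 :=
      lt_of_mul_lt_mul_right (by rwa [div_lt_div_iff₀ hp hp] at c1) hp.le
    have n2r : (2 * (J:ℝ)) < 2 * (j:ℝ) + 2 :=
      lt_of_mul_lt_mul_right (by rwa [div_lt_div_iff₀ hp hp] at c2) hp.le
    have n1 : 2 * j + 1 < 2 * J + 1 := by exact_mod_cast n1r
    have n2 : 2 * J < 2 * j + 2 := by exact_mod_cast n2r
    omega

def dseq (a : ℕ → Bool) : ℕ → Bool := fun n => if n % 2 = 0 then a (n / 2) else !(a (n / 2))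

lemma dseq_even (a : ℕ → Bool) (k : ℕ) : dseq a (2 * k) = a k := by
  simp [dseq, Nat.mul_mod_right, Nat.mul_div_cancel_left _ (by norm_num : 0 < 2)]

lemma dseq_odd (a : ℕ → Bool) (k : ℕ) : dseq a (2 * k + 1) = !(a k) := by
  have h1 : (2 * k + 1) % 2 = 1 := by omega
  have h2 : (2 * k + 1) / 2 = k := by omega
  simp [dseq, h1, h2]

lemma dseq_mixed (a : ℕ → Bool) (N : ℕ) :
    (∃ n, dseq a (n + N) = true) ∧ (∃ n, dseq a (n + N) = false) := by
  constructor
  · cases h : a N with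
    | true => exact ⟨N, by rw [show N + N = 2 * N by ring, dseq_even, h]⟩
    | false => exact ⟨N + 1, by rw [show N + 1 + N = 2 * N + 1 by ring, dseq_odd, h]; rfl⟩
  · cases h : a N with
    | false => exact ⟨N, by rw [show N + N = 2 * N by ring, dseq_even, h]⟩
    | true => exact ⟨N + 1, by rw [show N + 1 + N = 2 * N + 1 by ring, dseq_odd, h]; rfl⟩


lemma realCode_encode_iff (r : ℝ) (q : ℚ) :
    realCode r (Encodable.encode q) = true ↔ (q : ℝ) < r := by
  simp only [realCode, decide_eq_true_eq]
  constructor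
  · rintro ⟨q', hq', hlt⟩
    rwa [Encodable.encode_injective hq'] at hlt
  · intro h; exact ⟨q, rfl, h⟩

lemma interval_code {c₁ c₂ : ℝ} (h0 : 0 ≤ c₁) (hlt : c₁ < c₂) (a : ℕ → Bool) :
    ∃ r ∈ Set.Icc c₁ c₂, TuringLE a (realCode r) := by
  obtain ⟨u, hcu, huc⟩ := exists_rat_btwn hlt
  obtain ⟨v, huv, hvc⟩ := exists_rat_btwn huc
  have huv' : u < v := by exact_mod_cast huv
  have hu0 : 0 < u := by exact_mod_cast lt_of_le_of_lt h0 hcu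
  set lam : ℚ := v - u with hlam
  have hlam0 : 0 < lam := sub_pos.2 huv'
  set d : ℕ → Bool := dseq a with hd
  set x : ℝ := xval d with hx
  set r : ℝ := (u : ℝ) + (lam : ℝ) * x with hr
  have hx0 : 0 ≤ x := xval_nonneg d
  have hx1 : x ≤ 1 := xval_le_one d
  have hlamR : (0:ℝ) < (lam : ℝ) := by exact_mod_cast hlam0
  refine ⟨r, ⟨?_, ?_⟩, ?_⟩
  · have h1 : (0:ℝ) ≤ (lam : ℝ) * x := mul_nonneg hlamR.le hx0
    have := hcu.le
    rw [hr]; linarith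
  · have h1 : (lam : ℝ) * x ≤ (lam : ℝ) := by nlinarith
    have h2 : ((lam : ℚ) : ℝ) = (v : ℝ) - (u : ℝ) := by rw [hlam]; push_cast; ring
    rw [hr]; linarith [hvc.le, h1, h2]
  · -- the Turing reduction
    set u₁ : ℕ := u.num.toNat with hu₁
    set u₂ : ℕ := u.den with hu₂
    set l₁ : ℕ := lam.num.toNat with hl₁
    set l₂ : ℕ := lam.den with hl₂
    have hu₂0 : u₂ ≠ 0 := u.den_nz
    have hl₂0 : l₂ ≠ 0 := lam.den_nz
    have huR : (u : ℝ) = (u₁ : ℝ) / (u₂ : ℝ) := by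
      have h1 : ((u.num : ℚ)) / (u.den : ℚ) = u := Rat.num_div_den u
      have h2 : (u₁ : ℤ) = u.num := Int.toNat_of_nonneg (Rat.num_nonneg.2 hu0.le)
      rw [← h1, ← h2]
      push_cast
      norm_num
      rfl
    have hlR : ((lam : ℚ) : ℝ) = (l₁ : ℝ) / (l₂ : ℝ) := by
      have h1 : ((lam.num : ℚ)) / (lam.den : ℚ) = lam := Rat.num_div_den lam
      have h2 : (l₁ : ℤ) = lam.num := Int.toNat_of_nonneg (Rat.num_nonneg.2 hlam0.le)
      rw [← h1, ← h2]
      push_cast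
      norm_num
      rfl
    set Nf : ℕ → ℕ → ℕ := fun b m =>
      u₁ * l₂ * 2 ^ (2 * (Nat.unpair m).1 + 1) + l₁ * u₂ * (2 * (Nat.unpair m).2 + b) with hNf
    set Df : ℕ → ℕ := fun m => u₂ * l₂ * 2 ^ (2 * (Nat.unpair m).1 + 1) with hDf
    have hDf0 : ∀ m, Df m ≠ 0 := fun m => by
      simp only [hDf]
      have h2 : (2:ℕ) ^ (2 * (Nat.unpair m).1 + 1) ≠ 0 := by positivity
      exact mul_ne_zero (mul_ne_zero hu₂0 hl₂0) h2
    have hpow : ∀ m : ℕ, ((2:ℝ)) ^ (2 * (Nat.unpair m).1 + 1) ≠ 0 := fun m => by positivity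
    have hu₂R : ((u₂:ℝ)) ≠ 0 := by exact_mod_cast hu₂0
    have hl₂R : ((l₂:ℝ)) ≠ 0 := by exact_mod_cast hl₂0
    have hQcast : ∀ b m : ℕ, ((Nf b m : ℝ)) / ((Df m : ℝ))
        = (u:ℝ) + (lam : ℝ) *
          ((2 * ((Nat.unpair m).2 : ℝ) + (b:ℝ)) / 2 ^ (2 * (Nat.unpair m).1 + 1)) := by
      intro b m
      simp only [hNf, hDf]
      rw [huR, hlR]
      push_cast
      field_simp
    -- computability of the query functions
    have hpr : ∀ b : ℕ, Primrec (fun m => ratEnc (Nf b m) (Df m)) := by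
      intro b
      have h1 : Primrec (fun m : ℕ => 2 ^ (2 * (Nat.unpair m).1 + 1)) :=
        primrec_pow.comp (Primrec.const 2)
          (Primrec.succ.comp (Primrec.nat_mul.comp (Primrec.const 2)
            (Primrec.fst.comp Primrec.unpair)))
      have h2 : Primrec (fun m : ℕ => u₁ * l₂ * 2 ^ (2 * (Nat.unpair m).1 + 1)) :=
        Primrec.nat_mul.comp (Primrec.const (u₁ * l₂)) h1
      have h3 : Primrec (fun m : ℕ => l₁ * u₂ * (2 * (Nat.unpair m).2 + b)) :=
        Primrec.nat_mul.comp (Primrec.const (l₁ * u₂))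
          (Primrec.nat_add.comp
            (Primrec.nat_mul.comp (Primrec.const 2) (Primrec.snd.comp Primrec.unpair))
            (Primrec.const b))
      have h4 : Primrec (Nf b) := Primrec.nat_add.comp h2 h3
      have h5 : Primrec Df := Primrec.nat_mul.comp (Primrec.const (u₂ * l₂)) h1
      exact primrec_ratEnc.comp h4 h5
    have hBpr : Primrec (fun k : ℕ => 2 ^ (2 * k)) :=
      primrec_pow.comp (Primrec.const 2) (Primrec.nat_mul.comp (Primrec.const 2) Primrec.id)
    -- oracle value characterizations
    have hcond : ∀ c : ℕ, (toNatFun (realCode r) c ≠ 0 ↔ realCode r c = true)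
        ∧ (toNatFun (realCode r) c = 0 ↔ realCode r c = false) := by
      intro c
      unfold toNatFun
      cases h : realCode r c <;> simp
    have hO1 : ∀ m : ℕ, (toNatFun (realCode r) (ratEnc (Nf 1 m) (Df m)) ≠ 0)
        ↔ ((2 * ((Nat.unpair m).2 : ℝ) + 1) / 2 ^ (2 * (Nat.unpair m).1 + 1) < x) := by
      intro m
      rw [(hcond _).1, ← encode_div_nat _ _ (hDf0 m), realCode_encode_iff]
      push_cast
      rw [hQcast 1 m, hr, add_lt_add_iff_left, mul_lt_mul_iff_right₀ hlamR]
      norm_num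
    have hO2 : ∀ m : ℕ, (toNatFun (realCode r) (ratEnc (Nf 2 m) (Df m)) = 0)
        ↔ (x ≤ (2 * ((Nat.unpair m).2 : ℝ) + 2) / 2 ^ (2 * (Nat.unpair m).1 + 1)) := by
      intro m
      rw [(hcond _).2, ← encode_div_nat _ _ (hDf0 m)]
      have hfalse : realCode r (Encodable.encode ((Nf 2 m : ℚ) / (Df m : ℚ))) = false
          ↔ ¬ ((RatCast.ratCast ((Nf 2 m : ℚ) / (Df m : ℚ)) : ℝ) < r) := by
        rw [show ((RatCast.ratCast ((Nf 2 m : ℚ) / (Df m : ℚ)) : ℝ) < r)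
            = (realCode r (Encodable.encode ((Nf 2 m : ℚ) / (Df m : ℚ))) = true) from
          (propext (realCode_encode_iff r _)).symm]
        cases h : realCode r (Encodable.encode ((Nf 2 m : ℚ) / (Df m : ℚ))) <;> simp [h]
      rw [hfalse, not_lt]
      push_cast
      rw [hQcast 2 m, hr, add_le_add_iff_left, mul_le_mul_iff_right₀ hlamR]
      norm_num
    -- apply the key lemma
    apply recIn_key (toNatFun (realCode r)) a
      (fun m => ratEnc (Nf 1 m) (Df m)) (fun m => ratEnc (Nf 2 m) (Df m))
      (fun k => 2 ^ (2 * k)) (hpr 1).to_comp (hpr 2).to_comp hBpr.to_comp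
    intro k
    rw [show a k = d (2 * k) from (dseq_even a k).symm]
    rw [digit_iff d (fun N => dseq_mixed a N) (2 * k)]
    apply exists_congr
    intro j
    constructor
    · rintro ⟨hjlt, hlo, hhi⟩
      refine ⟨hjlt, ?_, ?_⟩
      · rw [hO1 (Nat.pair k j)]
        simpa [Nat.unpair_pair] using hlo
      · rw [hO2 (Nat.pair k j)]
        simpa [Nat.unpair_pair] using hhi
    · rintro ⟨hjlt, h1, h2⟩
      rw [hO1 (Nat.pair k j)] at h1
      rw [hO2 (Nat.pair k j)] at h2
      refine ⟨hjlt, ?_, ?_⟩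
      · simpa [Nat.unpair_pair] using h1
      · simpa [Nat.unpair_pair] using h2

lemma measurable_decide {α : Type*} [MeasurableSpace α] (P : α → Prop) [DecidablePred P]
    (h : MeasurableSet {y | P y}) : Measurable fun y => decide (P y) := by
  have e1 : (fun z : α => decide (P z)) ⁻¹' {true} = {z | P z} := by ext z; simp
  have e2 : (fun z : α => decide (P z)) ⁻¹' {false} = {z | P z}ᶜ := by ext z; simp
  refine measurable_to_countable fun y => ?_
  by_cases hy : P y
  · rw [decide_eq_true hy, e1]; exact h
  · rw [decide_eq_false hy, e2]; exact h.compl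
/-- Let `Γ` be a connected Polish group acting continuously and without fixed points on a
Polish (metric) space `X` with countable dense subset `{w i}`.  Then for every `x ∈ X` and
`a ∈ 2^ℕ` there are `g ∈ Γ` and `i` such that the code of the distance `d(g•x, w i)`
Turing-computes `a`; consequently the orbit equivalence relation has the Borel coding
property. -/
theorem stmt12 {G X : Type*} [TopologicalSpace G] [Group G] [IsTopologicalGroup G]
    [PolishSpace G] [ConnectedSpace G]
    [MetricSpace X] [PolishSpace X] [MeasurableSpace X] [BorelSpace X]
    [MulAction G X] [ContinuousSMul G X]
    (w : ℕ → X) (hw : DenseRange w)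
    (hnofix : ∀ x : X, ∃ g : G, g • x ≠ x) :
    (∀ (x : X) (a : ℕ → Bool), ∃ (g : G) (i : ℕ),
        TuringLE a (realCode (dist (g • x) (w i)))) ∧
    ∃ f : X → ℕ → Bool, Measurable f ∧
      ∀ (x : X) (a : ℕ → Bool), ∃ y ∈ MulAction.orbit G x, TuringLE a (f y) := by
  classical
  have part1 : ∀ (x : X) (a : ℕ → Bool), ∃ (g : G) (i : ℕ),
      TuringLE a (realCode (dist (g • x) (w i))) := by
    intro x a
    obtain ⟨g₀, hg₀⟩ := hnofix x
    have hε : 0 < dist (g₀ • x) x := dist_pos.2 hg₀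
    obtain ⟨i, hi⟩ : ∃ i, dist x (w i) < dist (g₀ • x) x / 2 :=
      Metric.denseRange_iff.1 hw x _ (half_pos hε)
    set φ : G → ℝ := fun g => dist (g • x) (w i) with hφ
    have hcont : Continuous φ := (continuous_id.smul continuous_const).dist continuous_const
    have hφ1 : φ 1 = dist x (w i) := by simp [hφ]
    have hlt : φ 1 < φ g₀ := by
      have htri := dist_triangle (g₀ • x) (w i) x
      have hsym : dist (w i) x = dist x (w i) := dist_comm _ _
      have hφg : φ g₀ = dist (g₀ • x) (w i) := rfl
      rw [hφ1, hφg]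
      linarith
    have h0 : 0 ≤ φ 1 := dist_nonneg
    obtain ⟨r, hrIcc, hrT⟩ := interval_code h0 hlt a
    obtain ⟨g, hg⟩ := intermediate_value_univ (1:G) g₀ hcont hrIcc
    refine ⟨g, i, ?_⟩
    have : φ g = dist (g • x) (w i) := rfl
    rw [← this, hg]
    exact hrT
  refine ⟨part1, ?_⟩
  refine ⟨fun y n => realCode (dist y (w (Nat.unpair n).1)) ((Nat.unpair n).2), ?_, ?_⟩
  · rw [measurable_pi_iff]
    intro n
    by_cases hex : ∃ q : ℚ, Encodable.encode q = (Nat.unpair n).2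
    · obtain ⟨q, hq⟩ := hex
      have he : (fun y : X => realCode (dist y (w (Nat.unpair n).1)) ((Nat.unpair n).2))
          = fun y => decide ((q:ℝ) < dist y (w (Nat.unpair n).1)) := by
        funext y
        rw [← hq]
        have h1 := realCode_encode_iff (dist y (w (Nat.unpair n).1)) q
        by_cases hlt : (q:ℝ) < dist y (w (Nat.unpair n).1)
        · rw [h1.2 hlt, decide_eq_true hlt]
        · rw [decide_eq_false hlt]
          cases hb : realCode (dist y (w (Nat.unpair n).1)) (Encodable.encode q) with
          | false => rfl
          | true => exact absurd (h1.1 hb) hlt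
      rw [he]
      apply measurable_decide
      have hopen : IsOpen {y : X | (q:ℝ) < dist y (w (Nat.unpair n).1)} :=
        isOpen_lt continuous_const (continuous_id.dist continuous_const)
      exact hopen.measurableSet
    · have he : (fun y : X => realCode (dist y (w (Nat.unpair n).1)) ((Nat.unpair n).2))
          = fun _ => false := by
        funext y
        simp only [realCode]
        apply decide_eq_false
        rintro ⟨q, hq, -⟩
        exact hex ⟨q, hq⟩
      rw [he]
      exact measurable_const
  · intro x a
    obtain ⟨g, i, hT⟩ := part1 x a
    refine ⟨g • x, MulAction.mem_orbit x g, ?_⟩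
    apply recIn_trans hT
    have e : toNatFun (realCode (dist (g • x) (w i)))
        = fun m => toNatFun (fun n => realCode (dist (g • x) (w (Nat.unpair n).1))
            ((Nat.unpair n).2)) (Nat.pair i m) := by
      funext m
      simp [toNatFun, Nat.unpair_pair]
    rw [e]
    exact recIn_oracleComp ((Primrec₂.natPair.comp (Primrec.const i) Primrec.id).to_comp)
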